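/- (a) If C ≥ 0 is such that for every n ∈ ℕ and all independent random variables X_1,…,X_n with E X_k = 0, E X_k² < ∞ and B_n² = Σ_k E X_k² > 0 one has Δ_n ≤ C·sup_{0<z<1}( |M_n(z)| + z·L_n(z) ), then C ≥ sup_{1/2<p<1} ( Φ(√((1−p)/p)) − (1−p) ) / ( √((1−p)³/p) + p ), and in particular C > 0.5685. (b) The same conclusion holds if instead Δ_n ≤ C·( |M_n(1)| + sup_{0<z<1} z·L_n(z) ) for all such n and X_1,…,X_n. -/

import Mathlib

open MeasureTheory ProbabilityTheory Real Set

/-- The standard normal distribution function. -/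
noncomputable def Phi (x : ℝ) : ℝ :=
  ∫ t in Set.Iic x, Real.exp (-t ^ 2 / 2) / Real.sqrt (2 * Real.pi)

/-- `B_n = sqrt (Σ E X_k²)`. -/
noncomputable def Bn {Ω : Type} [MeasurableSpace Ω] (μ : Measure Ω) {n : ℕ}
    (X : Fin n → Ω → ℝ) : ℝ :=
  Real.sqrt (∑ k, ∫ ω, (X k ω) ^ 2 ∂μ)

/-- Uniform distance between the d.f. of the normalized sum and the standard normal d.f. -/
noncomputable def Deltan {Ω : Type} [MeasurableSpace Ω] (μ : Measure Ω) {n : ℕ}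
    (X : Fin n → Ω → ℝ) : ℝ :=
  ⨆ x : ℝ, |(μ {ω | (∑ k, X k ω) / Bn μ X < x}).toReal - Phi x|

/-- `M_n(z) = B_n⁻³ Σ E[X_k³ 1_{|X_k| < z B_n}]`. -/
noncomputable def Mn {Ω : Type} [MeasurableSpace Ω] (μ : Measure Ω) {n : ℕ}
    (X : Fin n → Ω → ℝ) (z : ℝ) : ℝ :=
  (∑ k, ∫ ω, (if |X k ω| < z * Bn μ X then (X k ω) ^ 3 else 0) ∂μ) / (Bn μ X) ^ 3

/-- `L_n(z) = B_n⁻² Σ E[X_k² 1_{|X_k| ≥ z B_n}]` (the Lindeberg fraction). -/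
noncomputable def Lnn {Ω : Type} [MeasurableSpace Ω] (μ : Measure Ω) {n : ℕ}
    (X : Fin n → Ω → ℝ) (z : ℝ) : ℝ :=
  (∑ k, ∫ ω, (if z * Bn μ X ≤ |X k ω| then (X k ω) ^ 2 else 0) ∂μ) / (Bn μ X) ^ 2

/-- Hypotheses on the independent summands: measurability, independence, zero means,
finite second moments, positive total variance. -/
def GoodFamily {Ω : Type} [MeasurableSpace Ω] (μ : Measure Ω) {n : ℕ}
    (X : Fin n → Ω → ℝ) : Prop :=
  (∀ k, Measurable (X k)) ∧
  iIndepFun X μ ∧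
  (∀ k, Integrable (fun ω => (X k ω) ^ 2) μ) ∧
  (∀ k, ∫ ω, X k ω ∂μ = 0) ∧
  0 < ∑ k, ∫ ω, (X k ω) ^ 2 ∂μ

lemma gauss_eq : (fun x : ℝ => Real.exp (-x ^ 2 / 2)) = fun x : ℝ => Real.exp (-(1/2) * x ^ 2) := by
  funext x; ring_nf

lemma gauss_integrable : Integrable (fun x : ℝ => Real.exp (-x ^ 2 / 2)) := by
  rw [gauss_eq]; exact integrable_exp_neg_mul_sq (by norm_num)

lemma gauss_total : ∫ x : ℝ, Real.exp (-x ^ 2 / 2) = Real.sqrt (2 * π) := by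
  rw [gauss_eq]
  rw [integral_gaussian]
  rw [show π / (1/2) = 2 * π by ring]

lemma gauss_Iic_zero : ∫ x in Iic (0:ℝ), Real.exp (-x ^ 2 / 2) = Real.sqrt (2 * π) / 2 := by
  have h := integral_gaussian_Ioi (1/2)
  have h2 : ∫ x in Ioi (0:ℝ), Real.exp (-x ^ 2 / 2) = Real.sqrt (2 * π) / 2 := by
    rw [gauss_eq, h, show π / (1/2) = 2 * π by ring]
  rw [← h2, ← neg_zero, ← integral_comp_neg_Ioi]
  norm_num

lemma sqrt_two_pi_pos : 0 < Real.sqrt (2 * π) := Real.sqrt_pos.2 (by positivity)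

lemma Phi_eq (x : ℝ) : Phi x = (∫ t in Iic x, Real.exp (-t ^ 2 / 2)) / Real.sqrt (2 * π) := by
  unfold Phi
  rw [integral_div]

lemma Phi_zero : Phi 0 = 1/2 := by
  rw [Phi_eq, gauss_Iic_zero]
  field_simp

lemma Phi_nonneg (x : ℝ) : 0 ≤ Phi x := by
  rw [Phi_eq]
  apply div_nonneg _ sqrt_two_pi_pos.le
  exact setIntegral_nonneg measurableSet_Iic (fun t _ => (Real.exp_pos _).le)

lemma Phi_le_one (x : ℝ) : Phi x ≤ 1 := by
  rw [Phi_eq]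
  rw [div_le_one sqrt_two_pi_pos]
  calc (∫ t in Iic x, Real.exp (-t ^ 2 / 2)) ≤ ∫ t : ℝ, Real.exp (-t ^ 2 / 2) :=
        setIntegral_le_integral gauss_integrable
          (Filter.Eventually.of_forall fun t => (Real.exp_pos _).le)
    _ = Real.sqrt (2 * π) := gauss_total

lemma Phi_split (t : ℝ) (ht : 0 ≤ t) :
    Phi t = 1/2 + (∫ x in (0:ℝ)..t, Real.exp (-x ^ 2 / 2)) / Real.sqrt (2 * π) := by
  rw [Phi_eq, intervalIntegral.integral_of_le ht]
  have hsplit : (∫ x in Iic t, Real.exp (-x ^ 2 / 2))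
      = (∫ x in Iic (0:ℝ), Real.exp (-x ^ 2 / 2)) + ∫ x in Ioc (0:ℝ) t, Real.exp (-x ^ 2 / 2) := by
    rw [← setIntegral_union (Iic_disjoint_Ioc le_rfl) measurableSet_Ioc
      gauss_integrable.integrableOn gauss_integrable.integrableOn,
      Iic_union_Ioc_eq_Iic ht]
  rw [hsplit, gauss_Iic_zero, add_div]
  congr 1
  field_simp

lemma gauss_ptwise_lb {x : ℝ} (hx : |x| ≤ 1) :
    1 - x ^ 2 / 2 + x ^ 4 / 8 - x ^ 6 / 36 ≤ Real.exp (-x ^ 2 / 2) := by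
  have hy : |(-(x ^ 2 / 2))| ≤ 1 := by
    rw [abs_neg, abs_of_nonneg (by positivity)]
    nlinarith [abs_nonneg x, sq_abs x, abs_le.1 hx]
  have h := Real.exp_bound hy (n := 3) (by norm_num)
  rw [Finset.sum_range_succ, Finset.sum_range_succ, Finset.sum_range_succ,
    Finset.sum_range_zero] at h
  simp only [Nat.factorial] at h
  rw [abs_neg, abs_of_nonneg (by positivity : (0:ℝ) ≤ x ^ 2 / 2)] at h
  have h2 := (abs_le.1 h).1
  have : rexp (-x ^ 2 / 2) = rexp (-(x ^ 2 / 2)) := by ring_nf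
  rw [this]
  nlinarith [h2]

lemma gauss_ptwise_ub {x : ℝ} (hx : |x| ≤ 1) :
    Real.exp (-x ^ 2 / 2) ≤ 1 - x ^ 2 / 2 + 3 * x ^ 4 / 16 := by
  have hy : |(-(x ^ 2 / 2))| ≤ 1 := by
    rw [abs_neg, abs_of_nonneg (by positivity)]
    nlinarith [abs_nonneg x, sq_abs x, abs_le.1 hx]
  have h := Real.exp_bound hy (n := 2) (by norm_num)
  rw [Finset.sum_range_succ, Finset.sum_range_succ, Finset.sum_range_zero] at h
  simp only [Nat.factorial] at h
  rw [abs_neg, abs_of_nonneg (by positivity : (0:ℝ) ≤ x ^ 2 / 2)] at h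
  have h2 := (abs_le.1 h).2
  have : rexp (-x ^ 2 / 2) = rexp (-(x ^ 2 / 2)) := by ring_nf
  rw [this]
  nlinarith [h2]

lemma poly_int_lb (t : ℝ) :
    ∫ x in (0:ℝ)..t, (1 - x ^ 2 / 2 + x ^ 4 / 8 - x ^ 6 / 36)
      = t - t ^ 3 / 6 + t ^ 5 / 40 - t ^ 7 / 252 := by
  have hF : ∀ x : ℝ, HasDerivAt (fun x : ℝ => x - x ^ 3 / 6 + x ^ 5 / 40 - x ^ 7 / 252)
      (1 - x ^ 2 / 2 + x ^ 4 / 8 - x ^ 6 / 36) x := by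
    intro x
    have h := (((hasDerivAt_id x).sub ((hasDerivAt_pow 3 x).div_const 6)).add
      ((hasDerivAt_pow 5 x).div_const 40)).sub ((hasDerivAt_pow 7 x).div_const 252)
    refine h.congr_deriv ?_
    push_cast
    ring
  rw [intervalIntegral.integral_eq_sub_of_hasDerivAt (fun x _ => hF x)
    ((by fun_prop : Continuous fun x : ℝ => 1 - x ^ 2 / 2 + x ^ 4 / 8 - x ^ 6 / 36).intervalIntegrable 0 t)]
  ring

lemma poly_int_ub (t : ℝ) :
    ∫ x in (0:ℝ)..t, (1 - x ^ 2 / 2 + 3 * x ^ 4 / 16)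
      = t - t ^ 3 / 6 + 3 * t ^ 5 / 80 := by
  have hF : ∀ x : ℝ, HasDerivAt (fun x : ℝ => x - x ^ 3 / 6 + 3 * x ^ 5 / 80)
      (1 - x ^ 2 / 2 + 3 * x ^ 4 / 16) x := by
    intro x
    have h := ((hasDerivAt_id x).sub ((hasDerivAt_pow 3 x).div_const 6)).add
      (((hasDerivAt_pow 5 x).const_mul 3).div_const 80)
    refine h.congr_deriv ?_
    push_cast
    ring
  rw [intervalIntegral.integral_eq_sub_of_hasDerivAt (fun x _ => hF x)
    ((by fun_prop : Continuous fun x : ℝ => 1 - x ^ 2 / 2 + 3 * x ^ 4 / 16).intervalIntegrable 0 t)]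
  ring

lemma Phi_lower (t : ℝ) (h0 : 0 ≤ t) (h1 : t ≤ 1) :
    1/2 + (t - t ^ 3 / 6 + t ^ 5 / 40 - t ^ 7 / 252) / Real.sqrt (2 * π) ≤ Phi t := by
  rw [Phi_split t h0]
  have hint : (t - t ^ 3 / 6 + t ^ 5 / 40 - t ^ 7 / 252)
      ≤ ∫ x in (0:ℝ)..t, Real.exp (-x ^ 2 / 2) := by
    rw [← poly_int_lb t]
    apply intervalIntegral.integral_mono_on h0
      ((by fun_prop : Continuous fun x : ℝ => 1 - x ^ 2 / 2 + x ^ 4 / 8 - x ^ 6 / 36).intervalIntegrable 0 t)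
      ((by fun_prop : Continuous fun x : ℝ => Real.exp (-x ^ 2 / 2)).intervalIntegrable 0 t)
    intro x hx
    exact gauss_ptwise_lb (by rw [abs_of_nonneg hx.1]; linarith [hx.2])
  gcongr

lemma Phi_upper (t : ℝ) (h0 : 0 ≤ t) (h1 : t ≤ 1) :
    Phi t ≤ 1/2 + (t - t ^ 3 / 6 + 3 * t ^ 5 / 80) / Real.sqrt (2 * π) := by
  rw [Phi_split t h0]
  have hint : (∫ x in (0:ℝ)..t, Real.exp (-x ^ 2 / 2))
      ≤ t - t ^ 3 / 6 + 3 * t ^ 5 / 80 := by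
    rw [← poly_int_ub t]
    apply intervalIntegral.integral_mono_on h0
      ((by fun_prop : Continuous fun x : ℝ => Real.exp (-x ^ 2 / 2)).intervalIntegrable 0 t)
      ((by fun_prop : Continuous fun x : ℝ => 1 - x ^ 2 / 2 + 3 * x ^ 4 / 16).intervalIntegrable 0 t)
    intro x hx
    exact gauss_ptwise_ub (by rw [abs_of_nonneg hx.1]; linarith [hx.2])
  gcongr

lemma sqrt_two_pi_lt : Real.sqrt (2 * π) < 2.50663 := by
  rw [show (2.50663:ℝ) = Real.sqrt (2.50663^2) by rw [Real.sqrt_sq (by norm_num)]]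
  apply Real.sqrt_lt_sqrt (by positivity)
  nlinarith [Real.pi_lt_d6]

lemma lt_sqrt_two_pi : 2.5066 < Real.sqrt (2 * π) := by
  rw [show (2.5066:ℝ) = Real.sqrt (2.5066^2) by rw [Real.sqrt_sq (by norm_num)]]
  apply Real.sqrt_lt_sqrt (by positivity)
  nlinarith [Real.pi_gt_d6]

lemma numeric_pstar (t : ℝ) (ht : t = Real.sqrt ((941:ℝ)/9059)) :
    0.5685 * ((941/10000) * t + 9059/10000) < Phi t - 941/10000 := by
  have ht0 : 0 ≤ t := ht ▸ Real.sqrt_nonneg _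
  have ht2 : t ^ 2 = 941/9059 := by rw [ht, Real.sq_sqrt (by norm_num)]
  have htlo : (0.32229:ℝ) ≤ t := by
    rw [ht]
    rw [show (0.32229:ℝ) = Real.sqrt (0.32229^2) by rw [Real.sqrt_sq (by norm_num)]]
    exact Real.sqrt_le_sqrt (by norm_num)
  have hthi : t ≤ 1 := by
    rw [ht]
    have h := Real.sqrt_le_sqrt (show (941:ℝ)/9059 ≤ 1 by norm_num)
    simpa using h
  have e3 : t ^ 3 = (941/9059) * t := by rw [show t^3 = t^2*t by ring, ht2]
  have e5 : t ^ 5 = (941/9059)^2 * t := by rw [show t^5 = (t^2)^2*t by ring, ht2]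
  have e7 : t ^ 7 = (941/9059)^3 * t := by rw [show t^7 = (t^2)^3*t by ring, ht2]
  have hN : (0:ℝ) ≤ t - t ^ 3 / 6 + t ^ 5 / 40 - t ^ 7 / 252 := by
    rw [e3, e5, e7]; nlinarith [ht0]
  have hPhi := Phi_lower t ht0 hthi
  have hdiv : (t - t ^ 3 / 6 + t ^ 5 / 40 - t ^ 7 / 252) / 2.50663
      ≤ (t - t ^ 3 / 6 + t ^ 5 / 40 - t ^ 7 / 252) / Real.sqrt (2 * π) :=
    div_le_div_of_nonneg_left hN sqrt_two_pi_pos sqrt_two_pi_lt.le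
  have hfin : 0.5685 * ((941/10000) * t + 9059/10000)
      < 1/2 + (t - t ^ 3 / 6 + t ^ 5 / 40 - t ^ 7 / 252) / 2.50663 - 941/10000 := by
    rw [e3, e5, e7]
    have key : 1/2 + (t - 941/9059*t/6 + (941/9059)^2*t/40 - (941/9059)^3*t/252)/2.50663
        - (941:ℝ)/10000 - 0.5685*(941/10000*t+9059/10000)
        = -(2182083/20000000)
          + (79514559818205128386891433/234801873148874569020000000) * t := by
      ring
    nlinarith [key, htlo]
  linarith

lemma badpoly (t : ℝ) (h1 : 0.68 ≤ t) (h2 : t ≤ 1) :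
    (1+t^2)/2 + (t - t^3/6 + 3*t^5/80)/2.5066*(1+t^2) - t^2 - 0.5685*(t^3+1) ≤ 0 := by
  have ht0 : (0:ℝ) ≤ t := by linarith
  have e1 : t*(t - 0.68) ≥ 0 := mul_nonneg ht0 (by linarith)
  have e2 : t*(t^2 - 0.4624) ≥ 0 := mul_nonneg ht0 (by nlinarith)
  have e3 : t^7 ≤ t^3 := pow_le_pow_of_le_one ht0 h2 (by norm_num)
  have e4 : (0:ℝ) ≤ t^5 := pow_nonneg ht0 5
  have key : (1+t^2)/2 + (t - t^3/6 + 3*t^5/80)/2.5066*(1+t^2) - t^2 - 0.5685*(t^3+1)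
      = 1/2 - 0.5685 - (1/2)*t^2 + (5000/12533)*(t + (5/6)*t^3 - (31/240)*t^5 + (3/80)*t^7)
        - 0.5685*t^3 := by
    ring
  rw [key]
  linarith

lemma bad_region (p t : ℝ) (hp : 1/2 < p) (hp1 : p < 1) (ht0 : 0 ≤ t)
    (hpt : p * t ^ 2 = 1 - p) (hbad : p ^ 3 < 1 - p) :
    Phi t - (1 - p) ≤ 0.5685 * ((1 - p) * t + p) := by
  have hp0 : 0 < p := by linarith
  have ht1 : t ≤ 1 := by
    by_contra h
    push_neg at h
    nlinarith [mul_pos hp0 (mul_pos (by linarith : (0:ℝ) < t - 1) (by linarith : (0:ℝ) < t + 1))]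
  have hp68 : p < 0.6824 := by
    by_contra h
    push_neg at h
    nlinarith [pow_le_pow_left₀ (by norm_num : (0:ℝ) ≤ 0.6824) h 3]
  have htlo : (0.68:ℝ) ≤ t := by
    by_contra h
    push_neg at h
    have h2 : t ^ 2 < 0.4624 := by nlinarith
    nlinarith [mul_lt_mul_of_pos_left h2 hp0]
  have hq : (0:ℝ) < 1 + t ^ 2 := by positivity
  have hkey : p * (1 + t ^ 2) = 1 := by nlinarith [hpt]
  have hpe : p = 1 / (1 + t ^ 2) := by
    rw [eq_div_iff hq.ne']; exact hkey
  have hM : (0:ℝ) ≤ t - t ^ 3 / 6 + 3 * t ^ 5 / 80 := by nlinarith [pow_le_one₀ ht0 ht1 (n := 2), pow_nonneg ht0 5, pow_nonneg ht0 3]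
  have hPhi := Phi_upper t ht0 ht1
  have hdiv : (t - t ^ 3 / 6 + 3 * t ^ 5 / 80) / Real.sqrt (2 * π)
      ≤ (t - t ^ 3 / 6 + 3 * t ^ 5 / 80) / 2.5066 :=
    div_le_div_of_nonneg_left hM (by norm_num) lt_sqrt_two_pi.le
  have hb := badpoly t htlo ht1
  have main : 1/2 + (t - t ^ 3 / 6 + 3 * t ^ 5 / 80) / 2.5066 - (1 - p)
      ≤ 0.5685 * ((1 - p) * t + p) := by
    rw [← sub_nonpos]
    have identity : (1/2 + (t - t ^ 3 / 6 + 3 * t ^ 5 / 80) / 2.5066 - (1 - 1/(1+t^2)))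
          - 0.5685 * ((1 - 1/(1+t^2)) * t + 1/(1+t^2))
        = ((1+t^2)/2 + (t - t^3/6 + 3*t^5/80)/2.5066*(1+t^2) - t^2 - 0.5685*(t^3+1))
            / (1+t^2) := by
      field_simp
      ring
    rw [hpe, identity]
    exact div_nonpos_of_nonpos_of_nonneg hb hq.le
  linarith


/-! ### The two-point example -/

noncomputable def exμ (p : ℝ) : Measure ℝ :=
  (ENNReal.ofReal p) • Measure.dirac (1 - p) + (ENNReal.ofReal (1 - p)) • Measure.dirac (-p)

noncomputable def exX : Fin 1 → ℝ → ℝ := fun _ => id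

lemma integrable_dirac' {f : ℝ → ℝ} (hf : Measurable f) (a : ℝ) :
    Integrable f (Measure.dirac a) := by
  refine (integrable_const (f a)).congr ?_
  rw [Filter.EventuallyEq, MeasureTheory.ae_dirac_eq]
  exact Filter.eventually_pure.2 rfl

lemma integrable_exμ {f : ℝ → ℝ} (hf : Measurable f) (p : ℝ) :
    Integrable f (exμ p) := by
  unfold exμ
  exact ((integrable_dirac' hf _).smul_measure ENNReal.ofReal_ne_top).add_measure
    ((integrable_dirac' hf _).smul_measure ENNReal.ofReal_ne_top)

lemma integral_exμ {f : ℝ → ℝ} (hf : Measurable f) {p : ℝ} (hp0 : 0 ≤ p) (hp1 : p ≤ 1) :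
    ∫ x, f x ∂(exμ p) = p * f (1 - p) + (1 - p) * f (-p) := by
  unfold exμ
  rw [integral_add_measure ((integrable_dirac' hf _).smul_measure ENNReal.ofReal_ne_top)
    ((integrable_dirac' hf _).smul_measure ENNReal.ofReal_ne_top),
    integral_smul_measure, integral_smul_measure, integral_dirac, integral_dirac,
    ENNReal.toReal_ofReal hp0, ENNReal.toReal_ofReal (by linarith)]
  simp [smul_eq_mul]

lemma isProb_exμ {p : ℝ} (hp0 : 0 ≤ p) (hp1 : p ≤ 1) : IsProbabilityMeasure (exμ p) := by
  constructor
  simp only [exμ, Measure.add_apply, Measure.smul_apply, measure_univ, smul_eq_mul, mul_one]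
  rw [← ENNReal.ofReal_add hp0 (by linarith)]
  norm_num

section Example
variable {p : ℝ} (hp : 1/2 < p) (hp1 : p < 1)

include hp hp1

lemma ex_var_sum : ∑ k, ∫ ω, (exX k ω) ^ 2 ∂(exμ p) = p * (1 - p) := by
  rw [Fin.sum_univ_one]
  have h := integral_exμ (f := fun x : ℝ => x ^ 2) (by fun_prop) (by linarith) (by linarith)
  simp only [exX, id] at h ⊢
  rw [h]; ring

lemma ex_Bn : Bn (exμ p) exX = Real.sqrt (p * (1 - p)) := by
  rw [Bn, ex_var_sum hp hp1]

lemma ex_Bn_sq : (Bn (exμ p) exX) ^ 2 = p * (1 - p) := by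
  rw [ex_Bn hp hp1, Real.sq_sqrt (by nlinarith)]

lemma ex_Bn_pos : 0 < Bn (exμ p) exX := by
  rw [ex_Bn hp hp1]; exact Real.sqrt_pos.2 (by nlinarith)

lemma ex_Bn_lt : Bn (exμ p) exX < p := by
  have h2 := ex_Bn_sq hp hp1
  have h0 := ex_Bn_pos hp hp1
  nlinarith

lemma ex_lt_Bn : 1 - p < Bn (exμ p) exX := by
  have h2 := ex_Bn_sq hp hp1
  have h0 := ex_Bn_pos hp hp1
  nlinarith

lemma ex_t_mul_Bn : Real.sqrt ((1 - p) / p) * Bn (exμ p) exX = 1 - p := by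
  rw [ex_Bn hp hp1, ← Real.sqrt_mul (by
    apply div_nonneg <;> linarith : (0:ℝ) ≤ (1-p)/p)]
  rw [show (1 - p) / p * (p * (1 - p)) = (1-p)^2 by field_simp]
  exact Real.sqrt_sq (by linarith)

lemma ex_good : GoodFamily (exμ p) exX := by
  haveI := isProb_exμ (le_of_lt (by linarith : (0:ℝ) < p)) hp1.le
  refine ⟨fun k => measurable_id, ?_, ?_, ?_, ?_⟩
  · rw [iIndepFun_iff_measure_inter_preimage_eq_mul]
    intro S sets hsets
    have hS : S = ∅ ∨ S = {0} := by
      rcases S.eq_empty_or_nonempty with h | ⟨x, hx⟩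
      · exact Or.inl h
      · right
        ext i
        simp only [Finset.mem_singleton]
        constructor
        · intro _; exact Subsingleton.elim i 0
        · intro h
          rw [h]
          exact (Subsingleton.elim x 0) ▸ hx
    rcases hS with h | h <;> subst h <;> simp
  · intro k
    simp only [exX, id_eq]
    exact integrable_exμ (f := fun x : ℝ => x ^ 2) (by fun_prop) p
  · intro k
    have h := integral_exμ (f := fun x : ℝ => x) (by fun_prop) (by linarith) hp1.le
    simp only [exX, id] at h ⊢
    rw [h]; ring
  · rw [ex_var_sum hp hp1]; nlinarith

end Example

section Example2
variable {p : ℝ} (hp : 1/2 < p) (hp1 : p < 1)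

include hp hp1

lemma ex_deltan : Phi (Real.sqrt ((1-p)/p)) - (1-p) ≤ Deltan (exμ p) exX := by
  haveI := isProb_exμ (le_of_lt (by linarith : (0:ℝ) < p)) hp1.le
  set t := Real.sqrt ((1-p)/p) with htdef
  have hB0 := ex_Bn_pos hp hp1
  have htB := ex_t_mul_Bn hp hp1
  have hset : {ω : ℝ | (∑ k, exX k ω) / Bn (exμ p) exX < t} = Iio (1-p) := by
    ext ω
    simp only [Fin.sum_univ_one, exX, id_eq, mem_setOf_eq, mem_Iio]
    rw [div_lt_iff₀ hB0, ← htB]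
  have hmeas : (exμ p) {ω : ℝ | (∑ k, exX k ω) / Bn (exμ p) exX < t} = ENNReal.ofReal (1-p) := by
    rw [hset]
    simp only [exμ, Measure.add_apply, Measure.smul_apply,
      Measure.dirac_apply' _ measurableSet_Iio, smul_eq_mul]
    rw [Set.indicator_of_notMem (by simp : (1-p) ∉ Iio (1-p)),
      Set.indicator_of_mem (by simp only [mem_Iio]; linarith : -p ∈ Iio (1-p))]
    simp
  have hbdd : BddAbove (Set.range fun x : ℝ =>
      |((exμ p) {ω | (∑ k, exX k ω) / Bn (exμ p) exX < x}).toReal - Phi x|) := by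
    refine ⟨2, fun y hy => ?_⟩
    obtain ⟨x, rfl⟩ := hy
    have h1 : ((exμ p) {ω | (∑ k, exX k ω) / Bn (exμ p) exX < x}).toReal ≤ 1 := by
      rw [show (1:ℝ) = (1 : ENNReal).toReal by simp]
      exact ENNReal.toReal_mono (by simp) prob_le_one
    have h2 : 0 ≤ ((exμ p) {ω | (∑ k, exX k ω) / Bn (exμ p) exX < x}).toReal :=
      ENNReal.toReal_nonneg
    have h3 := Phi_nonneg x
    have h4 := Phi_le_one x
    rw [abs_le]
    constructor <;> linarith
  have key : |((exμ p) {ω | (∑ k, exX k ω) / Bn (exμ p) exX < t}).toReal - Phi t|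
      ≤ Deltan (exμ p) exX := le_ciSup hbdd t
  rw [hmeas, ENNReal.toReal_ofReal (by linarith)] at key
  calc Phi t - (1-p) ≤ |(1-p) - Phi t| := by
        rw [abs_sub_comm]; exact le_abs_self _
    _ ≤ Deltan (exμ p) exX := key

lemma ex_Mn_eq (z : ℝ) : Mn (exμ p) exX z
    = (p * (if 1 - p < z * Bn (exμ p) exX then (1-p)^3 else 0)
       + (1-p) * (if p < z * Bn (exμ p) exX then (-p)^3 else 0)) / (Bn (exμ p) exX)^3 := by
  rw [Mn, Fin.sum_univ_one]
  have hmf : Measurable fun x : ℝ => if |x| < z * Bn (exμ p) exX then x^3 else 0 :=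
    Measurable.ite (measurableSet_lt measurable_abs measurable_const) (by fun_prop)
      measurable_const
  have h := integral_exμ (f := fun x : ℝ => if |x| < z * Bn (exμ p) exX then x^3 else 0)
    hmf (by linarith) hp1.le
  simp only [exX, id_eq]
  erw [h]
  simp only [abs_neg, abs_of_nonneg (show (0:ℝ) ≤ 1-p by linarith),
    abs_of_nonneg (show (0:ℝ) ≤ p by linarith)]

lemma ex_Ln_eq (z : ℝ) : Lnn (exμ p) exX z
    = (p * (if z * Bn (exμ p) exX ≤ 1 - p then (1-p)^2 else 0)
       + (1-p) * (if z * Bn (exμ p) exX ≤ p then (-p)^2 else 0)) / (Bn (exμ p) exX)^2 := by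
  rw [Lnn, Fin.sum_univ_one]
  have hmf : Measurable fun x : ℝ => if z * Bn (exμ p) exX ≤ |x| then x^2 else 0 :=
    Measurable.ite (measurableSet_le measurable_const measurable_abs) (by fun_prop)
      measurable_const
  have h := integral_exμ (f := fun x : ℝ => if z * Bn (exμ p) exX ≤ |x| then x^2 else 0)
    hmf (by linarith) hp1.le
  simp only [exX, id_eq]
  erw [h]
  simp only [abs_neg, abs_of_nonneg (show (0:ℝ) ≤ 1-p by linarith),
    abs_of_nonneg (show (0:ℝ) ≤ p by linarith)]

end Example2

section Example3
variable {p : ℝ} (hp : 1/2 < p) (hp1 : p < 1)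

include hp hp1

lemma ex_bound_a {z : ℝ} (hz0 : 0 < z) (hz1 : z < 1) :
    |Mn (exμ p) exX z| + z * Lnn (exμ p) exX z ≤ (1-p) * Real.sqrt ((1-p)/p) + p := by
  set B := Bn (exμ p) exX with hBdef
  set t := Real.sqrt ((1-p)/p) with htdef
  have hB0 := ex_Bn_pos hp hp1
  have hB2 := ex_Bn_sq hp hp1
  have hBp := ex_Bn_lt hp hp1
  have huB := ex_lt_Bn hp hp1
  have htB := ex_t_mul_Bn hp hp1
  rw [← hBdef] at hB0 hB2 hBp huB htB
  have ht0 : 0 ≤ t := Real.sqrt_nonneg _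
  have ht1 : t < 1 := by nlinarith
  have hzBp : z * B < p := by nlinarith
  have hcond2 : ¬ (p < z * B) := not_lt.2 hzBp.le
  have hcond4 : z * B ≤ p := hzBp.le
  rw [ex_Mn_eq hp hp1, ex_Ln_eq hp hp1, ← hBdef]
  rcases le_or_gt z t with h | h
  · have hc1 : ¬ (1 - p < z * B) := by
      rw [← htB]; exact not_lt.2 (mul_le_mul_of_nonneg_right h hB0.le)
    have hc3 : z * B ≤ 1 - p := by
      rw [← htB]; exact mul_le_mul_of_nonneg_right h hB0.le
    rw [if_neg hc1, if_neg hcond2, if_pos hc3, if_pos hcond4]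
    have hLval : (p * (1-p)^2 + (1-p) * (-p)^2) / B^2 = 1 := by
      rw [div_eq_one_iff_eq (by positivity)]
      rw [hB2]; ring
    rw [hLval]
    simp only [mul_zero, zero_add, add_zero, abs_zero]
    norm_num
    nlinarith
  · have hc1 : 1 - p < z * B := by
      rw [← htB]; exact mul_lt_mul_of_pos_right h hB0
    have hc3 : ¬ (z * B ≤ 1 - p) := by
      rw [← htB]; exact not_le.2 (mul_lt_mul_of_pos_right h hB0)
    rw [if_pos hc1, if_neg hcond2, if_neg hc3, if_pos hcond4]
    have hMval : (p * (1-p)^3 + (1-p) * 0) / B^3 = (1-p) * t := by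
      rw [div_eq_iff (by positivity)]
      linear_combination (-(1-p)*B^2) * htB + (-(1-p)^2) * hB2
    have hLval : (p * 0 + (1-p) * (-p)^2) / B^2 = p := by
      rw [div_eq_iff (by positivity), hB2]; ring
    rw [hMval, hLval]
    rw [abs_of_nonneg (by nlinarith : (0:ℝ) ≤ (1-p)*t)]
    nlinarith

lemma ex_Mn_one : |Mn (exμ p) exX 1| = (1-p) * Real.sqrt ((1-p)/p) := by
  set B := Bn (exμ p) exX with hBdef
  set t := Real.sqrt ((1-p)/p) with htdef
  have hB0 := ex_Bn_pos hp hp1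
  have hB2 := ex_Bn_sq hp hp1
  have hBp := ex_Bn_lt hp hp1
  have huB := ex_lt_Bn hp hp1
  have htB := ex_t_mul_Bn hp hp1
  rw [← hBdef] at hB0 hB2 hBp huB htB
  have ht0 : 0 ≤ t := Real.sqrt_nonneg _
  rw [ex_Mn_eq hp hp1, ← hBdef, one_mul]
  rw [if_pos huB, if_neg (not_lt.2 hBp.le)]
  have hMval : (p * (1-p)^3 + (1-p) * 0) / B^3 = (1-p) * t := by
    rw [div_eq_iff (by positivity)]
    linear_combination (-(1-p)*B^2) * htB + (-(1-p)^2) * hB2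
  rw [hMval, abs_of_nonneg (by nlinarith : (0:ℝ) ≤ (1-p)*t)]

lemma ex_bound_b {z : ℝ} (hz0 : 0 < z) (hz1 : z < 1) :
    z * Lnn (exμ p) exX z ≤ max (Real.sqrt ((1-p)/p)) p := by
  set B := Bn (exμ p) exX with hBdef
  set t := Real.sqrt ((1-p)/p) with htdef
  have hB0 := ex_Bn_pos hp hp1
  have hB2 := ex_Bn_sq hp hp1
  have hBp := ex_Bn_lt hp hp1
  have htB := ex_t_mul_Bn hp hp1
  rw [← hBdef] at hB0 hB2 hBp htB
  have ht0 : 0 ≤ t := Real.sqrt_nonneg _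
  have hzBp : z * B < p := by nlinarith
  rw [ex_Ln_eq hp hp1, ← hBdef, if_pos hzBp.le]
  rcases le_or_gt z t with h | h
  · have hc3 : z * B ≤ 1 - p := by
      rw [← htB]; exact mul_le_mul_of_nonneg_right h hB0.le
    rw [if_pos hc3]
    have hLval : (p * (1-p)^2 + (1-p) * (-p)^2) / B^2 = 1 := by
      rw [div_eq_one_iff_eq (by positivity), hB2]; ring
    rw [hLval, mul_one]
    exact le_max_of_le_left h
  · have hc3 : ¬ (z * B ≤ 1 - p) := by
      rw [← htB]; exact not_le.2 (mul_lt_mul_of_pos_right h hB0)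
    rw [if_neg hc3]
    have hLval : (p * 0 + (1-p) * (-p)^2) / B^2 = p := by
      rw [div_eq_iff (by positivity), hB2]; ring
    rw [hLval]
    have : z * p ≤ p := by nlinarith
    exact le_max_of_le_right this

end Example3

lemma sqrt_cube {p : ℝ} (hp : 1/2 < p) (hp1 : p < 1) :
    Real.sqrt ((1-p)^3/p) = (1-p) * Real.sqrt ((1-p)/p) := by
  rw [show (1-p)^3/p = (1-p)^2 * ((1-p)/p) by field_simp,
    Real.sqrt_mul (sq_nonneg _), Real.sqrt_sq (by linarith)]

lemma master_a {C p : ℝ} (hC : 0 ≤ C) (hp : 1/2 < p) (hp1 : p < 1)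
    (hD : Deltan (exμ p) exX ≤
      C * sSup ((fun z => |Mn (exμ p) exX z| + z * Lnn (exμ p) exX z) '' Set.Ioo (0:ℝ) 1)) :
    Phi (Real.sqrt ((1-p)/p)) - (1-p) ≤ C * ((1-p) * Real.sqrt ((1-p)/p) + p) := by
  have ht0 : 0 ≤ Real.sqrt ((1-p)/p) := Real.sqrt_nonneg _
  have hsup : sSup ((fun z => |Mn (exμ p) exX z| + z * Lnn (exμ p) exX z) '' Set.Ioo (0:ℝ) 1)
      ≤ (1-p) * Real.sqrt ((1-p)/p) + p := by
    apply Real.sSup_le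
    · rintro y ⟨z, hz, rfl⟩
      exact ex_bound_a hp hp1 hz.1 hz.2
    · nlinarith
  calc Phi (Real.sqrt ((1-p)/p)) - (1-p) ≤ Deltan (exμ p) exX := ex_deltan hp hp1
    _ ≤ C * sSup ((fun z => |Mn (exμ p) exX z| + z * Lnn (exμ p) exX z) '' Set.Ioo (0:ℝ) 1) := hD
    _ ≤ C * ((1-p) * Real.sqrt ((1-p)/p) + p) := mul_le_mul_of_nonneg_left hsup hC

lemma master_b {C p : ℝ} (hC : 0 ≤ C) (hp : 1/2 < p) (hp1 : p < 1)
    (htp : Real.sqrt ((1-p)/p) ≤ p)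
    (hD : Deltan (exμ p) exX ≤
      C * (|Mn (exμ p) exX 1| + sSup ((fun z => z * Lnn (exμ p) exX z) '' Set.Ioo (0:ℝ) 1))) :
    Phi (Real.sqrt ((1-p)/p)) - (1-p) ≤ C * ((1-p) * Real.sqrt ((1-p)/p) + p) := by
  have hsup : sSup ((fun z => z * Lnn (exμ p) exX z) '' Set.Ioo (0:ℝ) 1) ≤ p := by
    apply Real.sSup_le
    · rintro y ⟨z, hz, rfl⟩
      exact (ex_bound_b hp hp1 hz.1 hz.2).trans (max_le htp le_rfl)
    · linarith
  have hbd : |Mn (exμ p) exX 1| + sSup ((fun z => z * Lnn (exμ p) exX z) '' Set.Ioo (0:ℝ) 1)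
      ≤ (1-p) * Real.sqrt ((1-p)/p) + p := by
    rw [ex_Mn_one hp hp1]
    linarith
  calc Phi (Real.sqrt ((1-p)/p)) - (1-p) ≤ Deltan (exμ p) exX := ex_deltan hp hp1
    _ ≤ C * (|Mn (exμ p) exX 1| + sSup ((fun z => z * Lnn (exμ p) exX z) '' Set.Ioo (0:ℝ) 1)) := hD
    _ ≤ C * ((1-p) * Real.sqrt ((1-p)/p) + p) := mul_le_mul_of_nonneg_left hbd hC


theorem lower_bound_esseen_rozovskii_1_1 :
    (∀ C : ℝ, 0 ≤ C →
      (∀ (Ω : Type) (mΩ : MeasurableSpace Ω) (μ : Measure Ω), IsProbabilityMeasure μ →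
        ∀ (n : ℕ) (X : Fin n → Ω → ℝ), GoodFamily μ X →
          Deltan μ X ≤
            C * sSup ((fun z => |Mn μ X z| + z * Lnn μ X z) '' Set.Ioo (0 : ℝ) 1)) →
      sSup ((fun p => (Phi (Real.sqrt ((1 - p) / p)) - (1 - p)) /
          (Real.sqrt ((1 - p) ^ 3 / p) + p)) '' Set.Ioo (1/2 : ℝ) 1) ≤ C ∧
      0.5685 < C) ∧
    (∀ C : ℝ, 0 ≤ C →
      (∀ (Ω : Type) (mΩ : MeasurableSpace Ω) (μ : Measure Ω), IsProbabilityMeasure μ →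
        ∀ (n : ℕ) (X : Fin n → Ω → ℝ), GoodFamily μ X →
          Deltan μ X ≤
            C * (|Mn μ X 1| +
              sSup ((fun z => z * Lnn μ X z) '' Set.Ioo (0 : ℝ) 1))) →
      sSup ((fun p => (Phi (Real.sqrt ((1 - p) / p)) - (1 - p)) /
          (Real.sqrt ((1 - p) ^ 3 / p) + p)) '' Set.Ioo (1/2 : ℝ) 1) ≤ C ∧
      0.5685 < C) := by
  have heq : Real.sqrt ((1-(9059/10000:ℝ))/(9059/10000)) = Real.sqrt ((941:ℝ)/9059) := by
    norm_num
  have hnum := numeric_pstar _ heq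
  have hDpos : 0 < (1-(9059/10000:ℝ)) * Real.sqrt ((1-(9059/10000:ℝ))/(9059/10000))
      + 9059/10000 := by
    have := Real.sqrt_nonneg ((1-(9059/10000:ℝ))/(9059/10000))
    nlinarith
  constructor
  · intro C hC H
    have key : ∀ q : ℝ, 1/2 < q → q < 1 →
        Phi (Real.sqrt ((1-q)/q)) - (1-q) ≤ C * ((1-q) * Real.sqrt ((1-q)/q) + q) := by
      intro q hq1 hq2
      exact master_a hC hq1 hq2
        (H ℝ _ (exμ q) (isProb_exμ (by linarith) hq2.le) 1 exX (ex_good hq1 hq2))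
    have hCgt : 0.5685 < C := by
      have hstar := key (9059/10000) (by norm_num) (by norm_num)
      have hCD : 0.5685 * ((1-(9059/10000:ℝ)) * Real.sqrt ((1-(9059/10000:ℝ))/(9059/10000))
            + 9059/10000)
          < C * ((1-(9059/10000:ℝ)) * Real.sqrt ((1-(9059/10000:ℝ))/(9059/10000))
            + 9059/10000) := by
        linarith
      exact lt_of_mul_lt_mul_right hCD hDpos.le
    refine ⟨?_, hCgt⟩
    apply Real.sSup_le _ hC
    rintro y ⟨q, hq, rfl⟩
    dsimp only
    have hq1 := hq.1; have hq2 := hq.2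
    have ht0 : 0 ≤ Real.sqrt ((1-q)/q) := Real.sqrt_nonneg _
    have hpos : 0 < (1-q) * Real.sqrt ((1-q)/q) + q := by nlinarith
    rw [sqrt_cube hq1 hq2, div_le_iff₀ hpos]
    exact key q hq1 hq2
  · intro C hC H
    have key : ∀ q : ℝ, 1/2 < q → q < 1 → Real.sqrt ((1-q)/q) ≤ q →
        Phi (Real.sqrt ((1-q)/q)) - (1-q) ≤ C * ((1-q) * Real.sqrt ((1-q)/q) + q) := by
      intro q hq1 hq2 htq
      exact master_b hC hq1 hq2 htq
        (H ℝ _ (exμ q) (isProb_exμ (by linarith) hq2.le) 1 exX (ex_good hq1 hq2))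
    have htpstar : Real.sqrt ((1-(9059/10000:ℝ))/(9059/10000)) ≤ 9059/10000 := by
      have h := Real.sqrt_le_sqrt
        (show (1-(9059/10000:ℝ))/(9059/10000) ≤ ((9059:ℝ)/10000)^2 by norm_num)
      rwa [Real.sqrt_sq (by norm_num)] at h
    have hCgt : 0.5685 < C := by
      have hstar := key (9059/10000) (by norm_num) (by norm_num) htpstar
      have hCD : 0.5685 * ((1-(9059/10000:ℝ)) * Real.sqrt ((1-(9059/10000:ℝ))/(9059/10000))
            + 9059/10000)
          < C * ((1-(9059/10000:ℝ)) * Real.sqrt ((1-(9059/10000:ℝ))/(9059/10000))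
            + 9059/10000) := by
        linarith
      exact lt_of_mul_lt_mul_right hCD hDpos.le
    refine ⟨?_, hCgt⟩
    apply Real.sSup_le _ hC
    rintro y ⟨q, hq, rfl⟩
    dsimp only
    have hq1 := hq.1; have hq2 := hq.2
    have ht0 : 0 ≤ Real.sqrt ((1-q)/q) := Real.sqrt_nonneg _
    have hpos : 0 < (1-q) * Real.sqrt ((1-q)/q) + q := by nlinarith
    rw [sqrt_cube hq1 hq2, div_le_iff₀ hpos]
    rcases le_or_gt (Real.sqrt ((1-q)/q)) q with htq | htq
    · exact key q hq1 hq2 htq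
    · -- bad region
      have hq0 : (0:ℝ) < q := by linarith
      have ht2 : (Real.sqrt ((1-q)/q))^2 = (1-q)/q :=
        Real.sq_sqrt (div_nonneg (by linarith) hq0.le)
      have hpt : q * (Real.sqrt ((1-q)/q))^2 = 1-q := by
        rw [ht2]; field_simp
      have hq3 : q^3 < 1-q := by
        have hsq : q^2 < (Real.sqrt ((1-q)/q))^2 := by
          nlinarith [mul_self_lt_mul_self hq0.le htq]
        nlinarith [hpt, hsq, hq0]
      have hbr := bad_region q (Real.sqrt ((1-q)/q)) hq1 hq2 ht0 hpt hq3
      calc Phi (Real.sqrt ((1-q)/q)) - (1-q)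
          ≤ 0.5685 * ((1-q) * Real.sqrt ((1-q)/q) + q) := hbr
        _ ≤ C * ((1-q) * Real.sqrt ((1-q)/q) + q) := by nlinarith [hCgt, hpos]
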